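/- If X satisfies S_1(K,K) (the selection principle for k-covers) and X has a countable dense subset in C_k(X)-sense, i.e., C_k(X) is separable, then C_k(X) satisfies S_1(D,D): for every sequence (D_n) of dense subsets of C_k(X) one can choose f_n ∈ D_n so that {f_n : n ∈ ℕ} is dense in C_k(X). -/

import Mathlib

set_option maxHeartbeats 1000000
set_option synthInstance.maxHeartbeats 400000
open Filter Topology ContinuousMap

def IsKCover {X : Type*} [TopologicalSpace X] (𝒰 : Set (Set X)) : Prop :=
  (∀ u ∈ 𝒰, IsOpen u) ∧ Set.univ ∉ 𝒰 ∧
    ∀ K : Set X, IsCompact K → ∃ u ∈ 𝒰, K ⊆ u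

section Aux

variable {X : Type*} [TopologicalSpace X]

lemma ck_nhds_basis (f : C(X, ℝ)) :
    (𝓝 f).HasBasis (fun p : Set X × ℝ => IsCompact p.1 ∧ 0 < p.2)
      (fun p => {g : C(X, ℝ) | ∀ x ∈ p.1, dist (f x) (g x) < p.2}) :=
  nhds_basis_uniformity'
    ((Metric.uniformity_basis_dist (α := ℝ)).compactConvergenceUniformity (α := X))

lemma ck_dense_iff {S : Set C(X, ℝ)} :
    Dense S ↔ ∀ g : C(X, ℝ), ∀ K : Set X, IsCompact K → ∀ ε : ℝ, 0 < ε →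
      ∃ f ∈ S, ∀ x ∈ K, dist (g x) (f x) < ε := by
  constructor
  · intro h g K hK ε hε
    rcases (mem_closure_iff_nhds_basis (ck_nhds_basis g)).1 (h g) (K, ε) ⟨hK, hε⟩ with
      ⟨f, hfS, hf⟩
    exact ⟨f, hfS, hf⟩
  · intro h g
    rw [mem_closure_iff_nhds_basis (ck_nhds_basis g)]
    rintro ⟨K, ε⟩ ⟨hK, hε⟩
    rcases h g K hK ε hε with ⟨f, h1, h2⟩
    exact ⟨f, h1, h2⟩

lemma kcover_of_dense [T35Space X] (hnc : ¬ IsCompact (Set.univ : Set X))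
    {D : Set C(X, ℝ)} (hD : Dense D) (g : C(X, ℝ)) {ε : ℝ} (hε : 0 < ε) :
    IsKCover {s : Set X | ∃ f ∈ D, s = {x | dist (g x) (f x) < ε} ∧ s ≠ Set.univ} := by
  refine ⟨?_, ?_, ?_⟩
  · rintro s ⟨f, -, rfl, -⟩
    exact isOpen_lt (Continuous.dist g.continuous f.continuous) continuous_const
  · rintro ⟨f, -, -, hne⟩
    exact hne rfl
  · intro K hK
    -- pick a point outside K
    have hKne : K ≠ Set.univ := by
      rintro rfl; exact hnc hK
    obtain ⟨x₀, hx₀⟩ := (Set.ne_univ_iff_exists_notMem K).1 hKne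
    obtain ⟨h, hcont, hh0, hh1⟩ :=
      CompletelyRegularSpace.completely_regular x₀ K hK.isClosed hx₀
    set g' : C(X, ℝ) := ⟨fun x => g x + 2 * ε * (1 - (h x : ℝ)),
      g.continuous.add (continuous_const.mul
        (continuous_const.sub (continuous_subtype_val.comp hcont)))⟩ with hg'
    have hg'K : ∀ x ∈ K, g' x = g x := by
      intro x hx
      have : h x = 1 := hh1 hx
      simp [hg', this]
    have hg'x₀ : g' x₀ = g x₀ + 2 * ε := by
      simp [hg', hh0]
    obtain ⟨f, hfD, hf⟩ := ck_dense_iff.1 hD g' (K ∪ {x₀})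
      (hK.union isCompact_singleton) ε hε
    refine ⟨{x | dist (g x) (f x) < ε}, ⟨f, hfD, rfl, ?_⟩, ?_⟩
    · -- x₀ is not in the set
      intro huniv
      have hx₀mem : dist (g x₀) (f x₀) < ε := by
        have : x₀ ∈ (Set.univ : Set X) := trivial
        rw [← huniv] at this
        exact this
      have h1 : dist (g' x₀) (f x₀) < ε := hf x₀ (Or.inr rfl)
      have h2 : dist (g x₀) (g' x₀) = 2 * ε := by
        rw [hg'x₀, Real.dist_eq]
        have : g x₀ - (g x₀ + 2 * ε) = -(2 * ε) := by ring
        rw [this, abs_neg, abs_of_pos (by linarith)]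
      have := dist_triangle (g x₀) (f x₀) (g' x₀)
      rw [dist_comm (f x₀) (g' x₀)] at this
      linarith
    · intro x hx
      have := hf x (Or.inl hx)
      rw [hg'K x hx] at this
      exact this

end Aux

/-- If `X` satisfies `S_1(K, K)` and `C_k(X)` is separable, then `C_k(X)` satisfies
`S_1(D, D)` (R-separability). -/
theorem stmt5 {X : Type*} [TopologicalSpace X] [T35Space X]
    (hX : ∀ 𝒰 : ℕ → Set (Set X), (∀ n, IsKCover (𝒰 n)) →
      ∃ u : ℕ → Set X, (∀ n, u n ∈ 𝒰 n) ∧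
        ∀ K : Set X, IsCompact K → ∃ n, K ⊆ u n)
    (hsep : ∃ D : Set C(X, ℝ), D.Countable ∧ Dense D) :
    ∀ D : ℕ → Set C(X, ℝ), (∀ n, Dense (D n)) →
      ∃ f : ℕ → C(X, ℝ), (∀ n, f n ∈ D n) ∧ Dense (Set.range f) := by
  intro D hD
  haveI : Nonempty C(X, ℝ) := ⟨0⟩
  by_cases hc : IsCompact (Set.univ : Set X)
  · -- compact case: C_k(X) is a separable metric space, hence second countable
    haveI : CompactSpace X := ⟨hc⟩
    obtain ⟨Q, hQc, hQd⟩ := hsep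
    haveI : TopologicalSpace.SeparableSpace C(X, ℝ) := ⟨⟨Q, hQc, hQd⟩⟩
    haveI : SecondCountableTopology C(X, ℝ) :=
      UniformSpace.secondCountable_of_separable _
    obtain ⟨b, hbc, hbne, hb⟩ := TopologicalSpace.exists_countable_basis C(X, ℝ)
    by_cases hbE : b.Nonempty
    · obtain ⟨e, he⟩ := hbc.exists_eq_range hbE
      have hsel : ∀ n, ∃ f, f ∈ D n ∩ e n := by
        intro n
        have hen : e n ∈ b := he ▸ Set.mem_range_self n
        have hopen : IsOpen (e n) := hb.isOpen hen
        have hne : (e n).Nonempty := Set.nonempty_iff_ne_empty.2 (fun h => hbne (h ▸ hen))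
        obtain ⟨x, hx⟩ := hne
        rcases (hD n).exists_mem_open hopen ⟨x, hx⟩ with ⟨f, hf1, hf2⟩
        exact ⟨f, hf1, hf2⟩
      choose f hf using hsel
      refine ⟨f, fun n => (hf n).1, ?_⟩
      rw [dense_iff_inter_open]
      intro U hU ⟨x, hx⟩
      obtain ⟨v, hvb, hxv, hvU⟩ := hb.exists_subset_of_mem_open hx hU
      obtain ⟨n, rfl⟩ := he ▸ hvb
      exact ⟨f n, hvU (hf n).2, Set.mem_range_self n⟩
    · -- b empty is impossible since the space is nonempty
      exfalso
      obtain ⟨x⟩ := (inferInstance : Nonempty C(X, ℝ))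
      obtain ⟨v, hvb, -, -⟩ := hb.exists_subset_of_mem_open (Set.mem_univ x) isOpen_univ
      exact hbE ⟨v, hvb⟩
  · -- noncompact case
    obtain ⟨Q, hQc, hQd⟩ := hsep
    have hQne : Q.Nonempty := hQd.nonempty
    obtain ⟨q, hq⟩ := hQc.exists_eq_range hQne
    let π : ℕ ≃ ℕ × ℕ × ℕ := (Denumerable.eqv (ℕ × ℕ × ℕ)).symm
    -- for each (m, j), a sequence of k-covers
    have hkc : ∀ m j k : ℕ,
        IsKCover {s : Set X | ∃ f ∈ D (π.symm (m, j, k)),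
          s = {x | dist (q m x) (f x) < 1 / (j + 1)} ∧ s ≠ Set.univ} := by
      intro m j k
      exact kcover_of_dense hc (hD (π.symm (m, j, k))) (q m)
        (by positivity)
    have hsel : ∀ m j : ℕ, ∃ u : ℕ → Set X,
        (∀ k, u k ∈ {s : Set X | ∃ f ∈ D (π.symm (m, j, k)),
          s = {x | dist (q m x) (f x) < 1 / (j + 1)} ∧ s ≠ Set.univ}) ∧
        ∀ K : Set X, IsCompact K → ∃ k, K ⊆ u k := by
      intro m j
      exact hX _ (fun k => hkc m j k)
    choose u hu hucov using hsel
    -- now define f n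
    have hfn : ∀ n : ℕ, ∃ f ∈ D n,
        u (π n).1 (π n).2.1 (π n).2.2 =
          {x | dist (q (π n).1 x) (f x) < 1 / ((π n).2.1 + 1)} := by
      intro n
      have := hu (π n).1 (π n).2.1 (π n).2.2
      rw [Equiv.symm_apply_apply] at this
      obtain ⟨f, hf1, hf2, -⟩ := this
      exact ⟨f, hf1, hf2⟩
    choose f hf1 hf2 using hfn
    refine ⟨f, hf1, ?_⟩
    rw [ck_dense_iff]
    intro g K hK ε hε
    -- choose m close to g on K
    obtain ⟨qm, hqmQ, hqm⟩ := ck_dense_iff.1 hQd g K hK (ε / 3) (by linarith)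
    obtain ⟨m, rfl⟩ := hq ▸ hqmQ
    -- choose j with 1/(j+1) < ε/3
    obtain ⟨j, hj⟩ := exists_nat_one_div_lt (K := ℝ) (show (0:ℝ) < ε / 3 by linarith)
    obtain ⟨k, hk⟩ := hucov m j K hK
    refine ⟨f (π.symm (m, j, k)), Set.mem_range_self _, ?_⟩
    intro x hx
    have h2 := hf2 (π.symm (m, j, k))
    rw [Equiv.apply_symm_apply] at h2
    have hx2 : dist (q m x) (f (π.symm (m, j, k)) x) < 1 / (j + 1) := by
      have := hk hx
      rw [h2] at this
      exact this
    calc dist (g x) (f (π.symm (m, j, k)) x)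
        ≤ dist (g x) (q m x) + dist (q m x) (f (π.symm (m, j, k)) x) := dist_triangle _ _ _
      _ < ε / 3 + 1 / (j + 1) := add_lt_add (hqm x hx) hx2
      _ < ε / 3 + ε / 3 := by linarith
      _ < ε := by linarith
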